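/- There exists r₀ > 0 such that for every r ∈ (0, r₀], the set S_r = {(x,y,z) ∈ ℝ³ : x² + y² + z² = r², z(x² + y²) + x²y²z − z⁴ < 0} has exactly two connected components. -/

import Mathlib

open Set Real

noncomputable def mk3 (a b c : ℝ) : EuclideanSpace ℝ (Fin 3) :=
  (WithLp.equiv 2 (Fin 3 → ℝ)).symm ![a, b, c]

@[simp] lemma mk3_0 (a b c : ℝ) : mk3 a b c 0 = a := rfl
@[simp] lemma mk3_1 (a b c : ℝ) : mk3 a b c 1 = b := rfl
@[simp] lemma mk3_2 (a b c : ℝ) : mk3 a b c 2 = c := rfl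

lemma mk3_cont {α : Type*} [TopologicalSpace α] {f g h : α → ℝ}
    (hf : Continuous f) (hg : Continuous g) (hh : Continuous h) :
    Continuous fun x => mk3 (f x) (g x) (h x) := by
  apply (PiLp.continuous_toLp 2 (fun _ : Fin 3 => ℝ)).comp
  apply continuous_pi
  intro i
  fin_cases i <;> simpa

lemma star_pc {s : Set (ℝ × ℝ)} (h0 : (0:ℝ×ℝ) ∈ s)
    (h : ∀ w ∈ s, ∀ t : ℝ, 0 ≤ t → t ≤ 1 → t • w ∈ s) : IsPathConnected s := by
  refine ⟨0, h0, @fun y hy => ?_⟩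
  refine ⟨⟨⟨fun t => (t : ℝ) • y, ?_⟩, by simp, by simp⟩, fun t => h y hy t t.2.1 t.2.2⟩
  fun_prop

lemma ext3 {p q : EuclideanSpace ℝ (Fin 3)} (h0 : p 0 = q 0) (h1 : p 1 = q 1)
    (h2 : p 2 = q 2) : p = q := by
  ext i; fin_cases i <;> assumption

lemma lower_pc {r : ℝ} (hr : 0 < r) :
    IsPathConnected {p : EuclideanSpace ℝ (Fin 3) |
      p 0 ^ 2 + p 1 ^ 2 + p 2 ^ 2 = r ^ 2 ∧ p 2 < 0} := by
  have hD : IsPathConnected {w : ℝ × ℝ | w.1 ^ 2 + w.2 ^ 2 < r ^ 2} := by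
    apply star_pc
    · simpa using pow_pos hr 2
    · rintro w hw t ht0 ht1
      simp only [mem_setOf_eq, Prod.smul_fst, Prod.smul_snd, smul_eq_mul] at hw ⊢
      have ht2 : t ^ 2 ≤ 1 := by nlinarith
      nlinarith [mul_nonneg (sub_nonneg.mpr ht2) (add_nonneg (sq_nonneg w.1) (sq_nonneg w.2))]
  have hcont : Continuous fun w : ℝ × ℝ =>
      mk3 w.1 w.2 (-Real.sqrt (r ^ 2 - w.1 ^ 2 - w.2 ^ 2)) := by
    apply mk3_cont continuous_fst continuous_snd
    fun_prop
  have himg : (fun w : ℝ × ℝ => mk3 w.1 w.2 (-Real.sqrt (r ^ 2 - w.1 ^ 2 - w.2 ^ 2))) ''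
      {w : ℝ × ℝ | w.1 ^ 2 + w.2 ^ 2 < r ^ 2} =
      {p : EuclideanSpace ℝ (Fin 3) | p 0 ^ 2 + p 1 ^ 2 + p 2 ^ 2 = r ^ 2 ∧ p 2 < 0} := by
    ext p
    constructor
    · rintro ⟨w, hw, rfl⟩
      simp only [mem_setOf_eq] at hw ⊢
      have hX : 0 < r ^ 2 - w.1 ^ 2 - w.2 ^ 2 := by linarith
      have h1 : Real.sqrt (r ^ 2 - w.1 ^ 2 - w.2 ^ 2) ^ 2 = r ^ 2 - w.1 ^ 2 - w.2 ^ 2 :=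
        Real.sq_sqrt hX.le
      constructor
      · simp only [mk3_0, mk3_1, mk3_2]; rw [neg_pow]; simp only [h1]; ring_nf
      · simp only [mk3_2]
        simpa using Real.sqrt_pos.mpr hX
    · rintro ⟨hs, hz⟩
      refine ⟨(p 0, p 1), ?_, ?_⟩
      · simp only [mem_setOf_eq]
        nlinarith [mul_pos_of_neg_of_neg hz hz]
      · have h2 : r ^ 2 - p 0 ^ 2 - p 1 ^ 2 = p 2 ^ 2 := by linarith
        apply ext3 <;> simp only [mk3_0, mk3_1, mk3_2]
        rw [h2, Real.sqrt_sq_eq_abs, abs_of_neg hz, neg_neg]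
  rw [← himg]
  exact hD.image hcont

lemma upper_pc {r : ℝ} (hr : 0 < r) :
    IsPathConnected {p : EuclideanSpace ℝ (Fin 3) |
      p 0 ^ 2 + p 1 ^ 2 + p 2 ^ 2 = r ^ 2 ∧ 0 < p 2 ∧
      p 2 * (p 0 ^ 2 + p 1 ^ 2) + p 0 ^ 2 * p 1 ^ 2 * p 2 - p 2 ^ 4 < 0} := by
  set U : Set (ℝ × ℝ) := {w : ℝ × ℝ | w.1 ^ 2 + w.2 ^ 2 + w.1 ^ 2 * w.2 ^ 2 <
      Real.sqrt (r ^ 2 - w.1 ^ 2 - w.2 ^ 2) ^ 3} with hUdef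
  have hUr : ∀ w ∈ U, w.1 ^ 2 + w.2 ^ 2 < r ^ 2 := by
    intro w hw
    by_contra hcon
    push_neg at hcon
    have h0 : Real.sqrt (r ^ 2 - w.1 ^ 2 - w.2 ^ 2) = 0 :=
      Real.sqrt_eq_zero_of_nonpos (by linarith)
    rw [hUdef, mem_setOf_eq, h0] at hw
    nlinarith [sq_nonneg w.1, sq_nonneg w.2, mul_nonneg (sq_nonneg w.1) (sq_nonneg w.2),
      pow_pos hr 2]
  have hU : IsPathConnected U := by
    apply star_pc
    · simp only [hUdef, mem_setOf_eq]
      norm_num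
      rw [Real.sqrt_sq hr.le]
      exact pow_pos hr 3
    · rintro w hw t ht0 ht1
      have hwr := hUr w hw
      rw [hUdef, mem_setOf_eq] at hw ⊢
      simp only [Prod.smul_fst, Prod.smul_snd, smul_eq_mul]
      have ht2 : t ^ 2 ≤ 1 := by nlinarith
      have ht4 : t ^ 2 * t ^ 2 ≤ 1 := by nlinarith
      have hmono : Real.sqrt (r ^ 2 - w.1 ^ 2 - w.2 ^ 2) ^ 3 ≤
          Real.sqrt (r ^ 2 - (t * w.1) ^ 2 - (t * w.2) ^ 2) ^ 3 := by
        apply pow_le_pow_left₀ (Real.sqrt_nonneg _)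
        apply Real.sqrt_le_sqrt
        nlinarith [mul_nonneg (sub_nonneg.mpr ht2) (add_nonneg (sq_nonneg w.1) (sq_nonneg w.2))]
      have ha : (t * w.1) ^ 2 + (t * w.2) ^ 2 ≤ w.1 ^ 2 + w.2 ^ 2 := by
        nlinarith [mul_nonneg (sub_nonneg.mpr ht2) (add_nonneg (sq_nonneg w.1) (sq_nonneg w.2))]
      have hb : (t * w.1) ^ 2 * (t * w.2) ^ 2 ≤ w.1 ^ 2 * w.2 ^ 2 := by
        nlinarith [mul_nonneg (sub_nonneg.mpr ht4) (mul_nonneg (sq_nonneg w.1) (sq_nonneg w.2))]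
      nlinarith [ha, hb, hw, hmono]
  have hcont : Continuous fun w : ℝ × ℝ =>
      mk3 w.1 w.2 (Real.sqrt (r ^ 2 - w.1 ^ 2 - w.2 ^ 2)) := by
    apply mk3_cont continuous_fst continuous_snd
    fun_prop
  have himg : (fun w : ℝ × ℝ => mk3 w.1 w.2 (Real.sqrt (r ^ 2 - w.1 ^ 2 - w.2 ^ 2))) '' U =
      {p : EuclideanSpace ℝ (Fin 3) |
        p 0 ^ 2 + p 1 ^ 2 + p 2 ^ 2 = r ^ 2 ∧ 0 < p 2 ∧
        p 2 * (p 0 ^ 2 + p 1 ^ 2) + p 0 ^ 2 * p 1 ^ 2 * p 2 - p 2 ^ 4 < 0} := by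
    ext p
    constructor
    · rintro ⟨w, hw, rfl⟩
      have hwr := hUr w hw
      rw [hUdef, mem_setOf_eq] at hw
      have hX : 0 < r ^ 2 - w.1 ^ 2 - w.2 ^ 2 := by linarith
      set z := Real.sqrt (r ^ 2 - w.1 ^ 2 - w.2 ^ 2) with hzdef
      have hz : 0 < z := Real.sqrt_pos.mpr hX
      have h1 : z ^ 2 = r ^ 2 - w.1 ^ 2 - w.2 ^ 2 := Real.sq_sqrt hX.le
      refine ⟨?_, ?_, ?_⟩
      · simp only [mem_setOf_eq, mk3_0, mk3_1, mk3_2, ← hzdef]; linarith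
      · simpa only [mk3_2, ← hzdef] using hz
      · simp only [mk3_0, mk3_1, mk3_2, ← hzdef]
        nlinarith [mul_lt_mul_of_pos_left hw hz]
    · rintro ⟨hs, hz, hf⟩
      simp only [mem_setOf_eq] at hs hz hf
      have h2 : r ^ 2 - p 0 ^ 2 - p 1 ^ 2 = p 2 ^ 2 := by linarith
      have hsq : Real.sqrt (r ^ 2 - p 0 ^ 2 - p 1 ^ 2) = p 2 := by
        rw [h2, Real.sqrt_sq hz.le]
      refine ⟨(p 0, p 1), ?_, ?_⟩
      · rw [hUdef, mem_setOf_eq]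
        simp only
        rw [hsq]
        have key : p 2 * (p 0 ^ 2 + p 1 ^ 2 + p 0 ^ 2 * p 1 ^ 2) < p 2 * p 2 ^ 3 := by
          nlinarith
        exact lt_of_mul_lt_mul_left (by linarith [key]) hz.le
      · apply ext3 <;> simp only [mk3_0, mk3_1, mk3_2]
        exact hsq
  rw [← himg]
  exact hU.image hcont

section Main

variable {r : ℝ}

/-- **topology in Example after Corollary `plik_7_1_1`.** There exists
`r₀ > 0` such that for every `r ∈ (0, r₀]` the set
`S_r = {(x,y,z) : x² + y² + z² = r², z(x² + y²) + x²y²z − z⁴ < 0}` has exactly two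
connected components. -/
theorem statement18 :
    ∃ r₀ > (0 : ℝ), ∀ r ∈ Ioc (0 : ℝ) r₀,
      Nat.card (ConnectedComponents
        ↥{p : EuclideanSpace ℝ (Fin 3) |
          (p 0) ^ 2 + (p 1) ^ 2 + (p 2) ^ 2 = r ^ 2 ∧
          p 2 * ((p 0) ^ 2 + (p 1) ^ 2) + (p 0) ^ 2 * (p 1) ^ 2 * p 2 - (p 2) ^ 4 < 0}) =
        2 := by
  refine ⟨1, one_pos, fun r hr => ?_⟩
  obtain ⟨hr0, -⟩ := hr
  set T : Set (EuclideanSpace ℝ (Fin 3)) :=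
    {p : EuclideanSpace ℝ (Fin 3) |
      (p 0) ^ 2 + (p 1) ^ 2 + (p 2) ^ 2 = r ^ 2 ∧
      p 2 * ((p 0) ^ 2 + (p 1) ^ 2) + (p 0) ^ 2 * (p 1) ^ 2 * p 2 - (p 2) ^ 4 < 0} with hT
  -- z ≠ 0 on T
  have hzne : ∀ x : ↥T, (x : EuclideanSpace ℝ (Fin 3)) 2 ≠ 0 := by
    rintro ⟨p, hp1, hp2⟩ h
    simp only at h
    rw [h] at hp2
    norm_num at hp2
  -- lower set
  set A : Set (EuclideanSpace ℝ (Fin 3)) :=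
    {p : EuclideanSpace ℝ (Fin 3) | p 0 ^ 2 + p 1 ^ 2 + p 2 ^ 2 = r ^ 2 ∧ p 2 < 0} with hA
  set B : Set (EuclideanSpace ℝ (Fin 3)) :=
    {p : EuclideanSpace ℝ (Fin 3) | p 0 ^ 2 + p 1 ^ 2 + p 2 ^ 2 = r ^ 2 ∧ 0 < p 2 ∧
      p 2 * (p 0 ^ 2 + p 1 ^ 2) + p 0 ^ 2 * p 1 ^ 2 * p 2 - p 2 ^ 4 < 0} with hB
  have hAT : A ⊆ T := by
    rintro p ⟨hs, hz⟩
    refine ⟨hs, ?_⟩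
    have t1 : p 2 * (p 0 ^ 2 + p 1 ^ 2) ≤ 0 :=
      mul_nonpos_of_nonpos_of_nonneg hz.le (by positivity)
    have t2 : p 0 ^ 2 * p 1 ^ 2 * p 2 ≤ 0 :=
      mul_nonpos_of_nonneg_of_nonpos (by positivity) hz.le
    have h2 : 0 < p 2 * p 2 := mul_pos_of_neg_of_neg hz hz
    nlinarith [mul_pos h2 h2]
  have hBT : B ⊆ T := fun p hp => ⟨hp.1, hp.2.2⟩
  -- preconnectedness in the subtype
  have hval : Topology.IsInducing (Subtype.val : ↥T → EuclideanSpace ℝ (Fin 3)) :=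
    Topology.IsInducing.subtypeVal
  have hpre : ∀ C : Set (EuclideanSpace ℝ (Fin 3)), C ⊆ T → IsPathConnected C →
      IsPreconnected ((Subtype.val : ↥T → EuclideanSpace ℝ (Fin 3)) ⁻¹' C) := by
    intro C hCT hC
    apply hval.isPreconnected_image.mp
    have : Subtype.val '' ((Subtype.val : ↥T → EuclideanSpace ℝ (Fin 3)) ⁻¹' C) = C := by
      rw [Subtype.image_preimage_coe]
      exact inter_eq_self_of_subset_right hCT
    rw [this]
    exact hC.isConnected.isPreconnected
  have hApre := hpre A hAT (lower_pc hr0)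
  have hBpre := hpre B hBT (upper_pc hr0)
  -- poles
  have hr4 : 0 < r ^ 4 := pow_pos hr0 4
  have hN : mk3 0 0 r ∈ T := by
    constructor <;> simp only [mk3_0, mk3_1, mk3_2] <;> norm_num
    exact hr4
  have hS : mk3 0 0 (-r) ∈ T := by
    constructor <;> simp only [mk3_0, mk3_1, mk3_2] <;> norm_num
    nlinarith [hr4]
  have hNB : (⟨mk3 0 0 r, hN⟩ : ↥T) ∈ (Subtype.val : ↥T → _) ⁻¹' B := by
    refine ⟨?_, ?_, ?_⟩ <;> simp only [mk3_0, mk3_1, mk3_2] <;> norm_num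
    exacts [hr0, hr4]
  have hSA : (⟨mk3 0 0 (-r), hS⟩ : ↥T) ∈ (Subtype.val : ↥T → _) ⁻¹' A := by
    refine ⟨?_, ?_⟩ <;> simp only [mk3_0, mk3_1, mk3_2] <;> norm_num
    exact hr0
  -- clopen upper half
  have hcont2 : Continuous fun x : ↥T => (x : EuclideanSpace ℝ (Fin 3)) 2 :=
    (continuous_apply (2 : Fin 3)).comp ((PiLp.continuous_ofLp 2 _).comp continuous_subtype_val)
  have hBopen : IsOpen {x : ↥T | 0 < (x : EuclideanSpace ℝ (Fin 3)) 2} :=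
    isOpen_Ioi.preimage hcont2
  have hBclosed : IsClosed {x : ↥T | 0 < (x : EuclideanSpace ℝ (Fin 3)) 2} := by
    have : {x : ↥T | 0 < (x : EuclideanSpace ℝ (Fin 3)) 2} =
        {x : ↥T | 0 ≤ (x : EuclideanSpace ℝ (Fin 3)) 2} := by
      ext x
      simp only [mem_setOf_eq]
      constructor
      · exact le_of_lt
      · intro h; exact lt_of_le_of_ne h (Ne.symm (hzne x))
    rw [this]
    exact isClosed_Ici.preimage hcont2
  have hBclopen : IsClopen {x : ↥T | 0 < (x : EuclideanSpace ℝ (Fin 3)) 2} :=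
    ⟨hBclosed, hBopen⟩
  -- counting
  rw [Nat.card_eq_two_iff]
  refine ⟨ConnectedComponents.mk ⟨mk3 0 0 r, hN⟩,
    ConnectedComponents.mk ⟨mk3 0 0 (-r), hS⟩, ?_, ?_⟩
  · intro h
    rw [ConnectedComponents.coe_eq_coe] at h
    have hmem : (⟨mk3 0 0 (-r), hS⟩ : ↥T) ∈ connectedComponent (⟨mk3 0 0 r, hN⟩ : ↥T) := by
      rw [h]; exact mem_connectedComponent
    have := hBclopen.connectedComponent_subset (by simpa using hr0) hmem
    simp only [mem_setOf_eq, mk3_2] at this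
    linarith
  · apply eq_univ_of_forall
    intro c
    obtain ⟨x, rfl⟩ := ConnectedComponents.surjective_coe c
    rcases lt_trichotomy ((x : EuclideanSpace ℝ (Fin 3)) 2) 0 with hx | hx | hx
    · right
      rw [mem_singleton_iff, ConnectedComponents.coe_eq_coe]
      have hxm : x ∈ (Subtype.val : ↥T → _) ⁻¹' A := ⟨x.2.1, hx⟩
      have h1 := hApre.subset_connectedComponent hSA hxm
      exact (connectedComponent_eq h1).symm
    · exact absurd hx (hzne x)
    · left
      rw [ConnectedComponents.coe_eq_coe]
      have hxm : x ∈ (Subtype.val : ↥T → _) ⁻¹' B := ⟨x.2.1, hx, x.2.2⟩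
      have h1 := hBpre.subset_connectedComponent hNB hxm
      exact (connectedComponent_eq h1).symm

end Main
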